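/- If 0 ∈ A ∩ B, A ⊕ B = {0,1,...,n-1} is a tiling of an interval with n > 1, and max A > max B, then A is periodic modulo n, i.e., there exists t with 0 < t < n such that (A + t) mod n = A mod n as subsets of ℤ_n. -/

import Mathlib

section TileAux

private lemma qsplit {q : ℕ} (hq0 : 0 < q) (x : ℕ) :
    ∃ k r, x = q * k + r ∧ r < q ∧ x % q = r ∧ x / q = k :=
  ⟨x / q, x % q, (Nat.div_add_mod x q).symm, Nat.mod_lt x hq0, rfl, rfl⟩

private lemma pin {n : ℕ} {A B : Finset ℕ}
    (hsum : ∀ a ∈ A, ∀ b ∈ B, a + b < n)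
    (htile : ∀ m < n, ∃! p : ℕ × ℕ, p.1 ∈ A ∧ p.2 ∈ B ∧ p.1 + p.2 = m)
    {a b a' b' : ℕ} (ha : a ∈ A) (hb : b ∈ B) (ha' : a' ∈ A) (hb' : b' ∈ B)
    (h : a + b = a' + b') : a = a' ∧ b = b' := by
  obtain ⟨p, -, hu⟩ := htile (a + b) (hsum a ha b hb)
  have h1 := hu (a, b) ⟨ha, hb, rfl⟩
  have h2 := hu (a', b') ⟨ha', hb', h.symm⟩
  rw [← h2] at h1
  exact ⟨congrArg Prod.fst h1, congrArg Prod.snd h1⟩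

private lemma repex {n : ℕ} {A B : Finset ℕ}
    (htile : ∀ m < n, ∃! p : ℕ × ℕ, p.1 ∈ A ∧ p.2 ∈ B ∧ p.1 + p.2 = m)
    {m : ℕ} (hm : m < n) : ∃ a ∈ A, ∃ b ∈ B, a + b = m := by
  obtain ⟨⟨a, b⟩, ⟨ha, hb, hab⟩, -⟩ := htile m hm
  exact ⟨a, ha, b, hb, hab⟩

private lemma swap_tile {n : ℕ} {A B : Finset ℕ}
    (htile : ∀ m < n, ∃! p : ℕ × ℕ, p.1 ∈ A ∧ p.2 ∈ B ∧ p.1 + p.2 = m) :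
    ∀ m < n, ∃! p : ℕ × ℕ, p.1 ∈ B ∧ p.2 ∈ A ∧ p.1 + p.2 = m := by
  intro m hm
  obtain ⟨⟨x, y⟩, ⟨hx, hy, hxy⟩, hu⟩ := htile m hm
  refine ⟨(y, x), ⟨hy, hx, by omega⟩, ?_⟩
  rintro ⟨y', x'⟩ ⟨h1, h2, h3⟩
  have h4 := hu (x', y') ⟨h2, h1, by omega⟩
  have h5 : x' = x := congrArg Prod.fst h4
  have h6 : y' = y := congrArg Prod.snd h4
  rw [h5, h6]

/-- climbing a block of `A` upward. -/
private lemma up {n q : ℕ} {A B : Finset ℕ}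
    (h0B : 0 ∈ B)
    (hsum : ∀ a ∈ A, ∀ b ∈ B, a + b < n)
    (htile : ∀ m < n, ∃! p : ℕ × ℕ, p.1 ∈ A ∧ p.2 ∈ B ∧ p.1 + p.2 = m)
    {M : ℕ} (hMn : M ≤ n)
    (hMb : ∀ m' < M, ∀ a ∈ A, ∀ b ∈ B, a + b = m' → q ∣ b ∧ ∀ i ≤ a % q, a - i ∈ A)
    {u : ℕ} (hu : u ∈ A) (hqu : q ∣ u) (hbd : u + q ≤ M) :
    ∀ j < q, u + j ∈ A := by
  intro j
  induction j with
  | zero => intro _; simpa using hu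
  | succ j ih =>
    intro hj
    have huj : u + j ∈ A := ih (by omega)
    have hlt : u + j + 1 < M := by omega
    obtain ⟨a3, ha3, b3, hb3, hab3⟩ := repex htile (lt_of_lt_of_le hlt hMn)
    obtain ⟨hqb3, hclo⟩ := hMb _ hlt a3 ha3 b3 hb3 hab3
    obtain ⟨c, rfl⟩ := hqb3
    obtain ⟨d, rfl⟩ := hqu
    have hmod : a3 % q = j + 1 := by
      have h1 : (a3 + q * c) % q = a3 % q := Nat.add_mul_mod_self_left a3 q c
      have h2 : (q * d + (j + 1)) % q = (j + 1) % q := Nat.mul_add_mod q d (j + 1)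
      rw [Nat.mod_eq_of_lt hj] at h2
      rw [hab3, Nat.add_assoc] at h1
      omega
    have ha3pos : 1 ≤ a3 := by have := Nat.mod_le a3 q; omega
    have ha3' : a3 - 1 ∈ A := hclo 1 (by omega)
    rcases Nat.eq_zero_or_pos c with hc | hc
    · subst hc
      have he : a3 = q * d + (j + 1) := by simp at hab3; omega
      rw [← he]; exact ha3
    · exfalso
      have hpin := pin hsum htile ha3' hb3 huj h0B
        (show (a3 - 1) + q * c = (q * d + j) + 0 by omega)
      have h0 : q * c = 0 := by omega
      rcases Nat.mul_eq_zero.mp h0 with h | h <;> omega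

/-- core structure lemma: with `q` the least positive element of `B`,
every element of `B` is divisible by `q`, `A` is a union of full `q`-blocks,
and `q ∣ n`. -/
private lemma core {n q : ℕ} {A B : Finset ℕ}
    (h0A : 0 ∈ A) (h0B : 0 ∈ B)
    (hsum : ∀ a ∈ A, ∀ b ∈ B, a + b < n)
    (htile : ∀ m < n, ∃! p : ℕ × ℕ, p.1 ∈ A ∧ p.2 ∈ B ∧ p.1 + p.2 = m)
    (hqB : q ∈ B) (hq2 : 2 ≤ q) (hqmin : ∀ b ∈ B, b ≠ 0 → q ≤ b) :
    (∀ b ∈ B, q ∣ b) ∧ (∀ a ∈ A, ∀ j < q, a - a % q + j ∈ A) ∧ q ∣ n := by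
  have hqn : q < n := by have := hsum 0 h0A q hqB; omega
  have hq0 : 0 < q := by omega
  have hlow : ∀ r, r < q → r ∈ A := by
    intro r
    induction r using Nat.strong_induction_on with
    | _ r ihr =>
      intro hr
      obtain ⟨a, ha, b, hb, hab⟩ := repex htile (show r < n by omega)
      have hb0 : b = 0 := by
        by_contra h
        have := hqmin b hb h
        omega
      have : a = r := by omega
      rwa [← this]
  -- master claim
  have hM : ∀ m, m < n → ∀ a ∈ A, ∀ b ∈ B, a + b = m →
      q ∣ b ∧ ∀ i ≤ a % q, a - i ∈ A := by
    intro m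
    induction m using Nat.strong_induction_on with
    | _ m IH =>
      intro hmn a ha b hb hab
      have hMb : ∀ m' < m, ∀ a ∈ A, ∀ b ∈ B, a + b = m' →
          q ∣ b ∧ ∀ i ≤ a % q, a - i ∈ A :=
        fun m' hm' => IH m' hm' (by omega)
      have hqb : q ∣ b := by
        rcases Nat.eq_zero_or_pos a with ha0 | hapos
        · -- a = 0, m = b
          subst ha0
          by_contra hnd
          obtain ⟨β, s, hbqs, hslt, hbmod, -⟩ := qsplit hq0 b
          have hs : s ≠ 0 := by
            intro h; exact hnd ⟨β, by omega⟩
          have hbq : q ≤ b := hqmin b hb (by omega)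
          have hβ : 1 ≤ β := by
            rcases Nat.eq_zero_or_pos β with h | h
            · subst h; simp at hbqs; omega
            · exact h
          have hbn : b < n := by have := hsum 0 h0A b hb; omega
          -- q * β ∈ A
          have hu : q * β ∈ A := by
            obtain ⟨a2, ha2, b2, hb2, hab2⟩ := repex htile (show q * β < n by omega)
            obtain ⟨hqb2, -⟩ := hMb (q * β) (by omega) a2 ha2 b2 hb2 hab2
            obtain ⟨c2, rfl⟩ := hqb2
            rcases Nat.eq_zero_or_pos c2 with hc2 | hc2
            · subst hc2
              have he : a2 = q * β := by simpa using hab2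
              rw [← he]; exact ha2
            · exfalso
              have hc2q : q ≤ q * c2 := Nat.le_mul_of_pos_right q hc2
              have hqa2 : q ∣ a2 := by
                have h1 : q ∣ q * β := Dvd.intro _ rfl
                have h2 : q ∣ q * c2 := Dvd.intro _ rfl
                have h3 := Nat.dvd_sub h1 h2
                have he : q * β - q * c2 = a2 := by omega
                rwa [he] at h3
              have hfull := up h0B hsum htile (le_of_lt hmn) hMb ha2 hqa2
                (show a2 + q ≤ m by omega)
              have ha5 : a2 + s ∈ A := hfull s hslt
              have hpin := pin hsum htile ha5 hb2 h0A hb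
                (show (a2 + s) + q * c2 = 0 + b by omega)
              omega
          -- collision (q - s) + b = (q*β) + q
          have h1 : q - s ∈ A := hlow _ (by omega)
          have hpin := pin hsum htile h1 hb hu hqB
            (show (q - s) + b = q * β + q by omega)
          have : q ∣ b := by rw [hpin.2]
          exact hnd this
        · exact (hMb b (by omega) 0 h0A b hb (by omega)).1
      refine ⟨hqb, ?_⟩
      rcases Nat.eq_zero_or_pos b with hb0 | hbpos
      · -- b = 0, m = a
        subst hb0
        have key : a % q ≠ 0 → a - 1 ∈ A := by
          intro hra
          obtain ⟨α, ra, haqs, hralt, hamod, -⟩ := qsplit hq0 a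
          have hra' : ra ≠ 0 := by rw [hamod] at hra; exact hra
          have hapos : 1 ≤ a := by omega
          obtain ⟨a1, ha1, b1, hb1, hab1⟩ := repex htile (show a - 1 < n by omega)
          obtain ⟨hqb1, hclo1⟩ := hMb (a - 1) (by omega) a1 ha1 b1 hb1 hab1
          obtain ⟨c1, rfl⟩ := hqb1
          rcases Nat.eq_zero_or_pos c1 with hc1 | hc1
          · subst hc1
            have he : a1 = a - 1 := by simpa using hab1
            rw [← he]; exact ha1
          · exfalso
            have hq1le : q ≤ q * c1 := Nat.le_mul_of_pos_right q hc1
            have hmod1 : a1 % q = ra - 1 := by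
              have h1 : (a1 + q * c1) % q = a1 % q := Nat.add_mul_mod_self_left a1 q c1
              have h2 : a - 1 = q * α + (ra - 1) := by omega
              have h3 : (q * α + (ra - 1)) % q = (ra - 1) % q := Nat.mul_add_mod q α (ra - 1)
              have h4 : (ra - 1) % q = ra - 1 := Nat.mod_eq_of_lt (by omega)
              rw [hab1, h2, h3, h4] at h1
              exact h1.symm
            have hu1 : a1 - (ra - 1) ∈ A := hclo1 _ (by rw [hmod1])
            obtain ⟨α1, r1, h1qs, h1lt, h1mod, -⟩ := qsplit hq0 a1
            have hr1 : r1 = ra - 1 := by omega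
            have hqu1 : q ∣ a1 - (ra - 1) := ⟨α1, by omega⟩
            have hfull := up h0B hsum htile (le_of_lt hmn) hMb hu1 hqu1
              (show (a1 - (ra - 1)) + q ≤ m by omega)
            have ha6 : a1 - (ra - 1) + ra ∈ A := hfull ra hralt
            have hpin := pin hsum htile ha6 hb1 ha h0B
              (show (a1 - (ra - 1) + ra) + q * c1 = a + 0 by omega)
            have h0 : q * c1 = 0 := by omega
            rcases Nat.mul_eq_zero.mp h0 with h | h <;> omega
        intro i hi
        rcases Nat.eq_zero_or_pos i with hi0 | hip
        · subst hi0; simpa using ha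
        · obtain ⟨α, ra, haqs, hralt, hamod, -⟩ := qsplit hq0 a
          have hira : i ≤ ra := by rw [hamod] at hi; exact hi
          have hra1 : 1 ≤ ra := by omega
          have h1 : a - 1 ∈ A := key (by rw [hamod]; omega)
          have hmod : (a - 1) % q = ra - 1 := by
            have h2 : a - 1 = q * α + (ra - 1) := by omega
            rw [h2, Nat.mul_add_mod, Nat.mod_eq_of_lt (by omega : ra - 1 < q)]
          have h3 := (hMb (a - 1) (by omega) (a - 1) h1 0 h0B (by omega)).2 (i - 1)
            (by rw [hmod]; omega)
          have he : (a - 1) - (i - 1) = a - i := by omega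
          rwa [he] at h3
      · exact (hMb a (by omega) a ha 0 h0B (by omega)).2
  -- global consequences
  have hBd : ∀ b ∈ B, q ∣ b := by
    intro b hb
    have hbn : b < n := by have := hsum 0 h0A b hb; omega
    exact (hM b hbn 0 h0A b hb (by omega)).1
  have hAclo : ∀ a ∈ A, ∀ i ≤ a % q, a - i ∈ A := by
    intro a ha
    have han : a < n := by have := hsum a ha 0 h0B; omega
    exact (hM a han a ha 0 h0B (by omega)).2
  have hqdn : q ∣ n := by
    obtain ⟨as, has, bs, hbs, habs⟩ := repex htile (show n - 1 < n by omega)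
    obtain ⟨hqbs, hclos⟩ := hM (n - 1) (by omega) as has bs hbs habs
    have hbspos : q ≤ bs := by
      rcases Nat.eq_zero_or_pos bs with h | h
      · exfalso; have := hsum as has q hqB; omega
      · exact hqmin bs hbs (by omega)
    obtain ⟨αs, rs, hsqs, hslt, hsmod, -⟩ := qsplit hq0 as
    have hr : rs = q - 1 := by
      by_contra hne
      have hu : as - rs ∈ A := hclos rs (by rw [hsmod])
      have hqu : q ∣ as - rs := ⟨αs, by omega⟩
      have hbd : (as - rs) + q ≤ n := by omega
      have hfull := up h0B hsum htile (le_refl n) hM hu hqu hbd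
      have htop : as - rs + (q - 1) ∈ A := hfull (q - 1) (by omega)
      have := hsum _ htop bs hbs
      omega
    obtain ⟨cs, hcs⟩ := hqbs
    refine ⟨αs + cs + 1, ?_⟩
    rw [Nat.mul_add, Nat.mul_add, Nat.mul_one]
    omega
  refine ⟨hBd, ?_, hqdn⟩
  intro a ha j hj
  obtain ⟨α, ra, haqs, hralt, hamod, -⟩ := qsplit hq0 a
  have hu : a - a % q ∈ A := hAclo a ha _ le_rfl
  have he : a - a % q = q * α := by rw [hamod]; omega
  have hqu : q ∣ a - a % q := ⟨α, he⟩
  obtain ⟨Nn, hNn⟩ := hqdn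
  have han : a < n := by have := hsum a ha 0 h0B; omega
  have hult : α < Nn := by
    have h2 : q * α < q * Nn := by omega
    exact Nat.lt_of_mul_lt_mul_left h2
  have hbd : (a - a % q) + q ≤ n := by
    have h5 : q * (α + 1) ≤ q * Nn := Nat.mul_le_mul_left q hult
    rw [Nat.mul_add, Nat.mul_one] at h5
    omega
  exact up h0B hsum htile (le_refl n) hM hu hqu hbd j hj

end TileAux
section TileAux2

private lemma sub_tile {n q N : ℕ} {A B : Finset ℕ} (hn : n = q * N) (hq0 : 0 < q)
    (h0A : 0 ∈ A) (h0B : 0 ∈ B)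
    (hsum : ∀ a ∈ A, ∀ b ∈ B, a + b < n)
    (htile : ∀ m < n, ∃! p : ℕ × ℕ, p.1 ∈ A ∧ p.2 ∈ B ∧ p.1 + p.2 = m)
    (hBd : ∀ b ∈ B, q ∣ b) (hAf : ∀ a ∈ A, ∀ j < q, a - a % q + j ∈ A) :
    (∀ a₁ ∈ A.image (· / q), ∀ j < q, q * a₁ + j ∈ A) ∧
    (∀ b₁ ∈ B.image (· / q), q * b₁ ∈ B) ∧
    (∀ a₁ ∈ A.image (· / q), ∀ b₁ ∈ B.image (· / q), a₁ + b₁ < N) ∧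
    (∀ m₁ < N, ∃! p : ℕ × ℕ,
      p.1 ∈ A.image (· / q) ∧ p.2 ∈ B.image (· / q) ∧ p.1 + p.2 = m₁) := by
  have hC1 : ∀ a₁ ∈ A.image (· / q), ∀ j < q, q * a₁ + j ∈ A := by
    intro a₁ h j hj
    obtain ⟨a, ha, rfl⟩ := Finset.mem_image.mp h
    have he : q * (a / q) = a - a % q := Nat.eq_sub_of_add_eq (Nat.div_add_mod a q)
    rw [he]
    exact hAf a ha j hj
  have hC2 : ∀ b₁ ∈ B.image (· / q), q * b₁ ∈ B := by
    intro b₁ h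
    obtain ⟨b, hb, rfl⟩ := Finset.mem_image.mp h
    rw [Nat.mul_div_cancel' (hBd b hb)]
    exact hb
  have hC3 : ∀ a₁ ∈ A.image (· / q), ∀ b₁ ∈ B.image (· / q), a₁ + b₁ < N := by
    intro a₁ ha₁ b₁ hb₁
    have h1 : q * a₁ + 0 ∈ A := hC1 a₁ ha₁ 0 hq0
    rw [Nat.add_zero] at h1
    have h2 : q * b₁ ∈ B := hC2 b₁ hb₁
    have h3 := hsum _ h1 _ h2
    rw [hn] at h3
    refine Nat.lt_of_mul_lt_mul_left (a := q) ?_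
    rw [Nat.mul_add]
    omega
  refine ⟨hC1, hC2, hC3, ?_⟩
  intro m₁ hm₁
  have hmn : q * m₁ < n := by
    have h := Nat.mul_le_mul_left q (show m₁ + 1 ≤ N from hm₁)
    rw [Nat.mul_add, Nat.mul_one] at h
    rw [hn]; omega
  obtain ⟨a, ha, b, hb, hab⟩ := repex htile hmn
  obtain ⟨cb, rfl⟩ := hBd b hb
  have hqa : q ∣ a := by
    have h1 : q ∣ q * m₁ := Dvd.intro _ rfl
    have h2 : q ∣ q * cb := Dvd.intro _ rfl
    have h3 := Nat.dvd_sub h1 h2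
    have he : q * m₁ - q * cb = a := by omega
    rwa [he] at h3
  obtain ⟨ca, hca⟩ := hqa
  have hsum1 : ca + cb = m₁ := by
    refine Nat.eq_of_mul_eq_mul_left hq0 ?_
    rw [Nat.mul_add]
    omega
  refine ⟨(ca, cb), ⟨?_, ?_, hsum1⟩, ?_⟩
  · exact Finset.mem_image.mpr ⟨a, ha, by rw [hca, Nat.mul_div_cancel_left ca hq0]⟩
  · exact Finset.mem_image.mpr ⟨q * cb, hb, by rw [Nat.mul_div_cancel_left cb hq0]⟩
  · rintro ⟨x, y⟩ ⟨hx, hy, hxy⟩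
    have hxA : q * x + 0 ∈ A := hC1 x hx 0 hq0
    rw [Nat.add_zero] at hxA
    have hyB : q * y ∈ B := hC2 y hy
    have heq : q * x + q * y = a + q * cb := by
      have h1 : q * (x + y) = q * m₁ := by rw [hxy]
      rw [Nat.mul_add] at h1
      omega
    have hpin := pin hsum htile hxA hyB ha hb heq
    have hx' : x = ca := Nat.eq_of_mul_eq_mul_left hq0 (by omega)
    have hy' : y = cb := Nat.eq_of_mul_eq_mul_left hq0 (by omega)
    rw [hx', hy']

private lemma lift {n q N t₁ : ℕ} {A A₁ : Finset ℕ} (hn : n = q * N) (hq0 : 0 < q)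
    (hN0 : 0 < N)
    (hmem : ∀ a ∈ A, a / q ∈ A₁)
    (F : ∀ a ∈ A, ∀ c ∈ A₁, q * c + a % q ∈ A)
    (hper : ∀ a₁ ∈ A₁, ∃ c ∈ A₁, (a₁ + t₁) % N = c) :
    ∀ a ∈ A, ∃ a' ∈ A, (a + q * t₁) % n = a' := by
  intro a ha
  obtain ⟨k, r, hkr, hrq, hrmod, hkdiv⟩ := qsplit hq0 a
  have hk₁ : k ∈ A₁ := by rw [← hkdiv]; exact hmem a ha
  obtain ⟨c, hc, hc'⟩ := hper k hk₁
  refine ⟨q * c + a % q, F a ha c hc, ?_⟩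
  rw [hrmod]
  have h1 : a + q * t₁ = q * (k + t₁) + r := by rw [Nat.mul_add]; omega
  rw [h1, hn]
  set X := (k + t₁) % N with hX
  have h2 : q * (k + t₁) % (q * N) = q * X := Nat.mul_mod_mul_left q (k + t₁) N
  have h3 : X < N := Nat.mod_lt _ hN0
  have h4 : q * (X + 1) ≤ q * N := Nat.mul_le_mul_left q h3
  rw [Nat.mul_add, Nat.mul_one] at h4
  rw [← Nat.mod_add_mod, h2, Nat.mod_eq_of_lt (by omega : q * X + r < q * N)]
  rw [← hc']

private lemma aux : ∀ n, 1 < n → ∀ A B : Finset ℕ, ∀ (h0A : 0 ∈ A) (h0B : 0 ∈ B),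
    (∀ a ∈ A, ∀ b ∈ B, a + b < n) →
    (∀ m < n, ∃! p : ℕ × ℕ, p.1 ∈ A ∧ p.2 ∈ B ∧ p.1 + p.2 = m) →
    B.max' ⟨0, h0B⟩ < A.max' ⟨0, h0A⟩ →
    ∃ t, 0 < t ∧ t < n ∧ ∀ a ∈ A, ∃ a' ∈ A, (a + t) % n = a' := by
  intro n
  induction n using Nat.strong_induction_on with
  | _ n IH =>
    intro hn A B h0A h0B hsum htile hmax
    by_cases hB0 : ∀ b ∈ B, b = 0
    · -- B = {0}; then A = [0, n) and t = 1 works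
      refine ⟨1, Nat.one_pos, by omega, ?_⟩
      intro a ha
      have hAall : ∀ m, m < n → m ∈ A := by
        intro m hm
        obtain ⟨a', ha', b', hb', h⟩ := repex htile hm
        have hb0 := hB0 b' hb'
        have he : a' = m := by omega
        rwa [he] at ha'
      have ha' : (a + 1) % n < n := Nat.mod_lt _ (by omega)
      exact ⟨(a + 1) % n, hAall _ ha', rfl⟩
    · push_neg at hB0
      obtain ⟨b₀, hb₀, hb₀0⟩ := hB0
      have hmAmem : A.max' ⟨0, h0A⟩ ∈ A := A.max'_mem _
      have hmA1 : 1 ≤ A.max' ⟨0, h0A⟩ := by omega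
      obtain ⟨x, hx, y, hy, hxy⟩ := repex htile hn
      have hxy1 : (x = 1 ∧ y = 0) ∨ (x = 0 ∧ y = 1) := by omega
      rcases hxy1 with ⟨hx1, hy0⟩ | ⟨hx0, hy1⟩
      · -- 1 ∈ A
        have h1A : 1 ∈ A := by rw [hx1] at hx; exact hx
        have hBe : (B.erase 0).Nonempty := ⟨b₀, Finset.mem_erase.mpr ⟨hb₀0, hb₀⟩⟩
        set q := (B.erase 0).min' hBe with hqdef
        have hqmem' := Finset.mem_erase.mp (Finset.min'_mem _ hBe)
        have hqmem : q ∈ B := hqmem'.2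
        have hq0' : q ≠ 0 := hqmem'.1
        have hqmin : ∀ b ∈ B, b ≠ 0 → q ≤ b := fun b hb hb0 =>
          Finset.min'_le _ _ (Finset.mem_erase.mpr ⟨hb0, hb⟩)
        have hq2 : 2 ≤ q := by
          rcases Nat.lt_or_ge q 2 with h | h
          · exfalso
            have hq1 : q = 1 := by omega
            rw [hq1] at hqmem
            have := pin hsum htile h1A h0B h0A hqmem (by omega)
            omega
          · exact h
        have hq0 : 0 < q := by omega
        obtain ⟨hBd, hAf, hqdvd⟩ := core h0A h0B hsum htile hqmem hq2 hqmin
        obtain ⟨N, hnN⟩ := hqdvd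
        obtain ⟨hC1, hC2, hC3, hC4⟩ := sub_tile hnN hq0 h0A h0B hsum htile hBd hAf
        have h0A₁ : 0 ∈ A.image (· / q) :=
          Finset.mem_image.mpr ⟨0, h0A, Nat.zero_div q⟩
        have h0B₁ : 0 ∈ B.image (· / q) :=
          Finset.mem_image.mpr ⟨0, h0B, Nat.zero_div q⟩
        have h1B₁ : 1 ∈ B.image (· / q) :=
          Finset.mem_image.mpr ⟨q, hqmem, Nat.div_self hq0⟩
        have hmax₁ : (B.image (· / q)).max' ⟨0, h0B₁⟩ < (A.image (· / q)).max' ⟨0, h0A₁⟩ := by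
          have hle : (B.image (· / q)).max' ⟨0, h0B₁⟩ ≤ (A.image (· / q)).max' ⟨0, h0A₁⟩ := by
            obtain ⟨b, hbB, hbeq⟩ := Finset.mem_image.mp ((B.image (· / q)).max'_mem ⟨0, h0B₁⟩)
            rw [← hbeq]
            have hb1 : b ≤ A.max' ⟨0, h0A⟩ := by
              have := Finset.le_max' B b hbB; omega
            calc b / q ≤ A.max' ⟨0, h0A⟩ / q := Nat.div_le_div_right hb1
              _ ≤ (A.image (· / q)).max' ⟨0, h0A₁⟩ :=
                  Finset.le_max' (A.image (· / q)) (A.max' ⟨0, h0A⟩ / q)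
                    (Finset.mem_image_of_mem (· / q) hmAmem)
          have hne : (B.image (· / q)).max' ⟨0, h0B₁⟩ ≠ (A.image (· / q)).max' ⟨0, h0A₁⟩ := by
            intro he
            have hmax₁mem := (A.image (· / q)).max'_mem ⟨0, h0A₁⟩
            have hlt : (A.image (· / q)).max' ⟨0, h0A₁⟩ < N := by
              have := hC3 _ hmax₁mem 0 h0B₁; omega
            obtain ⟨p, hp, hu⟩ := hC4 _ hlt
            have e1 := hu ((A.image (· / q)).max' ⟨0, h0A₁⟩, 0)
              ⟨hmax₁mem, h0B₁, Nat.add_zero _⟩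
            have e2 := hu (0, (A.image (· / q)).max' ⟨0, h0A₁⟩)
              ⟨h0A₁, by rw [← he]; exact (B.image (· / q)).max'_mem ⟨0, h0B₁⟩, Nat.zero_add _⟩
            rw [← e2] at e1
            have h5 : (A.image (· / q)).max' ⟨0, h0A₁⟩ = 0 := congrArg Prod.fst e1
            have h6 : 1 ≤ (B.image (· / q)).max' ⟨0, h0B₁⟩ := Finset.le_max' _ _ h1B₁
            omega
          omega
        have hN1 : 1 < N := by
          have h1 : (A.image (· / q)).max' ⟨0, h0A₁⟩ < N := by
            have := hC3 _ ((A.image (· / q)).max'_mem ⟨0, h0A₁⟩) 0 h0B₁; omega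
          have h2 : 1 ≤ (B.image (· / q)).max' ⟨0, h0B₁⟩ := Finset.le_max' _ _ h1B₁
          omega
        have hNn : N < n := by
          have h := Nat.mul_le_mul_right N hq2
          omega
        obtain ⟨t₁, ht₁0, ht₁N, hper₁⟩ :=
          IH N hNn hN1 (A.image (· / q)) (B.image (· / q)) h0A₁ h0B₁ hC3 hC4 hmax₁
        refine ⟨q * t₁, Nat.mul_pos hq0 ht₁0, ?_, ?_⟩
        · have h := Nat.mul_le_mul_left q (show t₁ + 1 ≤ N from ht₁N)
          rw [Nat.mul_add, Nat.mul_one] at h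
          omega
        · refine lift hnN hq0 (by omega) (fun a ha => Finset.mem_image.mpr ⟨a, ha, rfl⟩)
            (fun a ha c hc => hC1 c hc (a % q) (Nat.mod_lt a hq0)) hper₁
      · -- 1 ∈ B
        have h1B : 1 ∈ B := by rw [hy1] at hy; exact hy
        have hAe : (A.erase 0).Nonempty :=
          ⟨A.max' ⟨0, h0A⟩, Finset.mem_erase.mpr ⟨by omega, hmAmem⟩⟩
        set q := (A.erase 0).min' hAe with hqdef
        have hqmem' := Finset.mem_erase.mp (Finset.min'_mem _ hAe)
        have hqmem : q ∈ A := hqmem'.2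
        have hq0' : q ≠ 0 := hqmem'.1
        have hqmin : ∀ a ∈ A, a ≠ 0 → q ≤ a := fun a ha ha0 =>
          Finset.min'_le _ _ (Finset.mem_erase.mpr ⟨ha0, ha⟩)
        have hq2 : 2 ≤ q := by
          rcases Nat.lt_or_ge q 2 with h | h
          · exfalso
            have hq1 : q = 1 := by omega
            rw [hq1] at hqmem
            have := pin hsum htile hqmem h0B h0A h1B (by omega)
            omega
          · exact h
        have hq0 : 0 < q := by omega
        have hsum' : ∀ b ∈ B, ∀ a ∈ A, b + a < n := fun b hb a ha => by
          rw [Nat.add_comm]; exact hsum a ha b hb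
        have htile' := swap_tile htile
        obtain ⟨hAd, hBf, hqdvd⟩ := core h0B h0A hsum' htile' hqmem hq2 hqmin
        obtain ⟨N, hnN⟩ := hqdvd
        obtain ⟨hC1, hC2, hC3, hC4⟩ := sub_tile hnN hq0 h0B h0A hsum' htile' hAd hBf
        have htile₁ := swap_tile hC4
        have hsum₁ : ∀ a₁ ∈ A.image (· / q), ∀ b₁ ∈ B.image (· / q), a₁ + b₁ < N :=
          fun a₁ ha₁ b₁ hb₁ => by rw [Nat.add_comm]; exact hC3 b₁ hb₁ a₁ ha₁
        have h0A₁ : 0 ∈ A.image (· / q) :=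
          Finset.mem_image.mpr ⟨0, h0A, Nat.zero_div q⟩
        have h0B₁ : 0 ∈ B.image (· / q) :=
          Finset.mem_image.mpr ⟨0, h0B, Nat.zero_div q⟩
        have h1A₁ : 1 ∈ A.image (· / q) :=
          Finset.mem_image.mpr ⟨q, hqmem, Nat.div_self hq0⟩
        have hmax₁ : (B.image (· / q)).max' ⟨0, h0B₁⟩ < (A.image (· / q)).max' ⟨0, h0A₁⟩ := by
          have hle : (B.image (· / q)).max' ⟨0, h0B₁⟩ ≤ (A.image (· / q)).max' ⟨0, h0A₁⟩ := by
            obtain ⟨b, hbB, hbeq⟩ := Finset.mem_image.mp ((B.image (· / q)).max'_mem ⟨0, h0B₁⟩)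
            rw [← hbeq]
            have hb1 : b ≤ A.max' ⟨0, h0A⟩ := by
              have := Finset.le_max' B b hbB; omega
            calc b / q ≤ A.max' ⟨0, h0A⟩ / q := Nat.div_le_div_right hb1
              _ ≤ (A.image (· / q)).max' ⟨0, h0A₁⟩ :=
                  Finset.le_max' (A.image (· / q)) (A.max' ⟨0, h0A⟩ / q)
                    (Finset.mem_image_of_mem (· / q) hmAmem)
          have hne : (B.image (· / q)).max' ⟨0, h0B₁⟩ ≠ (A.image (· / q)).max' ⟨0, h0A₁⟩ := by
            intro he
            have hmax₁mem := (A.image (· / q)).max'_mem ⟨0, h0A₁⟩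
            have hlt : (A.image (· / q)).max' ⟨0, h0A₁⟩ < N := by
              have := hsum₁ _ hmax₁mem 0 h0B₁; omega
            obtain ⟨p, hp, hu⟩ := htile₁ _ hlt
            have e1 := hu ((A.image (· / q)).max' ⟨0, h0A₁⟩, 0)
              ⟨hmax₁mem, h0B₁, Nat.add_zero _⟩
            have e2 := hu (0, (A.image (· / q)).max' ⟨0, h0A₁⟩)
              ⟨h0A₁, by rw [← he]; exact (B.image (· / q)).max'_mem ⟨0, h0B₁⟩, Nat.zero_add _⟩
            rw [← e2] at e1
            have h5 : (A.image (· / q)).max' ⟨0, h0A₁⟩ = 0 := congrArg Prod.fst e1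
            have h6 : 1 ≤ (A.image (· / q)).max' ⟨0, h0A₁⟩ := Finset.le_max' _ _ h1A₁
            omega
          omega
        have hN1 : 1 < N := by
          have h1 : (A.image (· / q)).max' ⟨0, h0A₁⟩ < N := by
            have := hsum₁ _ ((A.image (· / q)).max'_mem ⟨0, h0A₁⟩) 0 h0B₁; omega
          have h2 : 1 ≤ (A.image (· / q)).max' ⟨0, h0A₁⟩ := Finset.le_max' _ _ h1A₁
          omega
        have hNn : N < n := by
          have h := Nat.mul_le_mul_right N hq2
          omega
        obtain ⟨t₁, ht₁0, ht₁N, hper₁⟩ :=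
          IH N hNn hN1 (A.image (· / q)) (B.image (· / q)) h0A₁ h0B₁ hsum₁ htile₁ hmax₁
        refine ⟨q * t₁, Nat.mul_pos hq0 ht₁0, ?_, ?_⟩
        · have h := Nat.mul_le_mul_left q (show t₁ + 1 ≤ N from ht₁N)
          rw [Nat.mul_add, Nat.mul_one] at h
          omega
        · refine lift hnN hq0 (by omega) (fun a ha => Finset.mem_image.mpr ⟨a, ha, rfl⟩)
            (fun a ha c hc => ?_) hper₁
          have h0 : a % q = 0 := by
            obtain ⟨k, rfl⟩ := hAd a ha
            exact Nat.mul_mod_right q k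
          rw [h0, Nat.add_zero]
          exact hC2 c hc

end TileAux2

/-- if `A ⊕ B = [n]`, `n > 1`, `0 ∈ A ∩ B` and `max A > max B`,
then `A` is periodic mod `n`. -/
theorem stmt_2 (n : ℕ) (hn : 1 < n) (A B : Finset ℕ)
    (h0A : 0 ∈ A) (h0B : 0 ∈ B)
    (hsum : ∀ a ∈ A, ∀ b ∈ B, a + b < n)
    (htile : ∀ m < n, ∃! p : ℕ × ℕ, p.1 ∈ A ∧ p.2 ∈ B ∧ p.1 + p.2 = m)
    (hmax : B.max' ⟨0, h0B⟩ < A.max' ⟨0, h0A⟩) :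
    ∃ t : ℕ, 0 < t ∧ t < n ∧
      ∀ x : ZMod n, x ∈ A.image (Nat.cast : ℕ → ZMod n) ↔
        x + (t : ZMod n) ∈ A.image (Nat.cast : ℕ → ZMod n) := by
  obtain ⟨t, ht0, htn, hper⟩ := aux n hn A B h0A h0B hsum htile hmax
  have hAlt : ∀ a ∈ A, a < n := fun a ha => by
    have := hsum a ha 0 h0B; omega
  have hsurj : ∀ a' ∈ A, ∃ a ∈ A, (a + t) % n = a' := by
    have hmain := Finset.surj_on_of_inj_on_of_card_le (s := A) (t := A)
      (fun a _ => (a + t) % n)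
      (fun a ha => by obtain ⟨a', ha', h⟩ := hper a ha; show (a + t) % n ∈ A; rw [h]; exact ha')
      (fun a₁ a₂ h₁ h₂ heq => by
        have h3 : a₁ % n = a₂ % n := Nat.ModEq.add_right_cancel' t heq
        rw [Nat.mod_eq_of_lt (hAlt _ h₁), Nat.mod_eq_of_lt (hAlt _ h₂)] at h3
        exact h3)
      le_rfl
    intro a' ha'
    obtain ⟨a, ha, h⟩ := hmain a' ha'
    exact ⟨a, ha, h.symm⟩
  refine ⟨t, ht0, htn, ?_⟩
  intro x
  constructor
  · intro hx
    obtain ⟨a, ha, rfl⟩ := Finset.mem_image.mp hx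
    obtain ⟨a', ha', h⟩ := hper a ha
    refine Finset.mem_image.mpr ⟨a', ha', ?_⟩
    rw [← h, ZMod.natCast_mod, Nat.cast_add]
  · intro hx
    obtain ⟨a', ha', heq⟩ := Finset.mem_image.mp hx
    obtain ⟨a, ha, h⟩ := hsurj a' ha'
    refine Finset.mem_image.mpr ⟨a, ha, ?_⟩
    have h1 : ((a : ZMod n)) + (t : ZMod n) = x + (t : ZMod n) := by
      rw [← Nat.cast_add, ← ZMod.natCast_mod, h, heq]
    exact add_right_cancel h1
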